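/- Let A ∈ ℤ^{d×n} with ℤ-span of columns equal to ℤ^d, β ∈ ℂ^d, and v ∈ (ℂ ∖ ℤ_{<0})ⁿ with A·v = β. Then for every u ∈ ker_ℤ(A) the coefficient [v]_{u₋}/[u+v]_{u₊} is well defined (the denominator is nonzero), where [v]_{u₋} = ∏_{u_i<0} ∏_{j=1}^{-u_i}(v_i - j + 1) and [u+v]_{u₊} = ∏_{u_i>0} ∏_{j=1}^{u_i}(v_i + j), and the formal series φ_v = Σ_{u ∈ ker_ℤ(A)} ([v]_{u₋}/[u+v]_{u₊}) x^{u+v} is annihilated by every toric operator ∂^{u₊} − ∂^{u₋} (u ∈ ker_ℤ(A)) and by every Euler operator Σ_j a_{ij} x_j ∂_j − β_i. -/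

import Mathlib

open scoped Classical

noncomputable def F1 (s : ℂ) (c : ℤ) : ℂ :=
  (∏ l ∈ Finset.range (-c).toNat, (s - l)) /
  (∏ l ∈ Finset.range c.toNat, (s + (l + 1)))

lemma hne (s : ℂ) (hs : ¬ ∃ k : ℤ, k < 0 ∧ s = (k : ℂ)) (m : ℕ) :
    s + ((m : ℂ) + 1) ≠ 0 := by
  intro h
  apply hs
  refine ⟨-(m + 1), by omega, ?_⟩
  push_cast
  linear_combination h

lemma F1_step (s : ℂ) (hs : ¬ ∃ k : ℤ, k < 0 ∧ s = (k : ℂ)) (b : ℤ) :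
    F1 s (b + 1) * (s + ((b : ℂ) + 1)) = F1 s b := by
  rcases le_or_gt 0 b with hb | hb
  · have h1 : (b + 1).toNat = b.toNat + 1 := by omega
    have h2 : (-(b + 1)).toNat = 0 := by omega
    have h3 : (-b).toNat = 0 := by omega
    have hb' : (b : ℂ) = (b.toNat : ℂ) := by
      exact_mod_cast (Int.toNat_of_nonneg hb).symm
    unfold F1
    rw [h1, h2, h3, Finset.prod_range_succ]
    simp only [Finset.range_zero, Finset.prod_empty, hb']
    rw [div_mul_eq_mul_div, div_eq_div_iff]
    · ring
    · exact mul_ne_zero (by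
        apply Finset.prod_ne_zero_iff.2
        intro l _
        simpa using hne s hs l) (hne s hs b.toNat)
    · apply Finset.prod_ne_zero_iff.2
      intro l _
      simpa using hne s hs l
  · have h1 : (b + 1).toNat = 0 := by omega
    have h2 : b.toNat = 0 := by omega
    have h3 : (-b).toNat = (-(b + 1)).toNat + 1 := by omega
    have hb' : (b : ℂ) + 1 = -(((-(b + 1)).toNat : ℂ)) := by
      have h4 : ((-(b+1)).toNat : ℤ) = -(b+1) := by omega
      have h5 := congrArg (fun z : ℤ => (z : ℂ)) h4
      push_cast at h5
      linear_combination h5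
    unfold F1
    rw [h1, h2, h3, Finset.prod_range_succ]
    simp only [Finset.range_zero, Finset.prod_empty, hb']
    ring

lemma F1_key (s : ℂ) (hs : ¬ ∃ k : ℤ, k < 0 ∧ s = (k : ℂ)) (c : ℤ) (a : ℕ) :
    F1 s (c + a) * ∏ l ∈ Finset.range a, (s + ((c + (a : ℤ) : ℤ) : ℂ) - l)
      = F1 s c := by
  induction a with
  | zero => simp
  | succ a ih =>
    push_cast at ih ⊢
    have hsplit : ∏ l ∈ Finset.range (a + 1), (s + ((c : ℂ) + ((a : ℂ) + 1)) - l)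
        = (∏ l ∈ Finset.range a, (s + ((c : ℂ) + (a : ℂ)) - l)) *
          (s + ((c : ℂ) + (a : ℂ) + 1)) := by
      rw [Finset.prod_range_succ']
      congr 1
      · apply Finset.prod_congr rfl
        intro l _
        push_cast
        ring
      · push_cast; ring
    have hstep := F1_step s hs (c + a)
    push_cast at hstep
    rw [show c + ((a : ℤ) + 1) = (c + (a : ℤ)) + 1 from by ring, hsplit]
    calc F1 s (c + (a : ℤ) + 1) *
          ((∏ l ∈ Finset.range a, (s + ((c : ℂ) + (a : ℂ)) - l)) *
            (s + ((c : ℂ) + (a : ℂ) + 1)))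
        = (F1 s (c + (a : ℤ) + 1) * (s + ((c : ℂ) + (a : ℂ) + 1))) *
            ∏ l ∈ Finset.range a, (s + ((c : ℂ) + (a : ℂ)) - l) := by ring
      _ = F1 s (c + (a : ℤ)) * ∏ l ∈ Finset.range a, (s + ((c : ℂ) + (a : ℂ)) - l) := by
            rw [hstep]
      _ = F1 s c := ih


/-- The "falling factorial" scalar `∂^a x^s = fallP s a · x^{s-a}`:
`fallP s a = ∏ⱼ ∏_{l=0}^{aⱼ-1} (sⱼ - l)`. -/
noncomputable def fallP {n : ℕ} (s : Fin n → ℂ) (a : Fin n → ℕ) : ℂ :=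
  ∏ j, ∏ l ∈ Finset.range (a j), (s j - l)

/-- The positive part `u₊` of `u ∈ ℤⁿ`, as an integer vector. -/
def uposZ {n : ℕ} (u : Fin n → ℤ) : Fin n → ℤ := fun j => max (u j) 0

/-- The negative part `u₋` of `u ∈ ℤⁿ`, as an integer vector. -/
def unegZ {n : ℕ} (u : Fin n → ℤ) : Fin n → ℤ := fun j => max (-u j) 0

/-- The positive part `u₊` of `u ∈ ℤⁿ`, as a natural-number vector. -/
def uposN {n : ℕ} (u : Fin n → ℤ) : Fin n → ℕ := fun j => (u j).toNat

/-- The negative part `u₋` of `u ∈ ℤⁿ`, as a natural-number vector. -/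
def unegN {n : ℕ} (u : Fin n → ℤ) : Fin n → ℕ := fun j => (-u j).toNat

/-- The coefficient `[v]_{u₋}/[u+v]_{u₊}` of `x^{v+u}` in the series `φ_v`, where
`[v]_{u₋} = ∏_{uᵢ<0} ∏_{j=1}^{-uᵢ} (vᵢ - j + 1)` and
`[u+v]_{u₊} = ∏_{uᵢ>0} ∏_{j=1}^{uᵢ} (vᵢ + j)`. -/
noncomputable def hypCoeff {n : ℕ} (v : Fin n → ℂ) (u : Fin n → ℤ) : ℂ :=
  (∏ j, ∏ l ∈ Finset.range (unegN u j), (v j - l)) /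
  (∏ j, ∏ l ∈ Finset.range (uposN u j), (v j + (l + 1)))

/-- The coefficient function of the formal series
`φ_v = Σ_{u ∈ ker_ℤ A} ([v]_{u₋}/[u+v]_{u₊}) x^{v+u}`: the coefficient of `x^{v+u}`. -/
noncomputable def phiCoeff {d n : ℕ} (A : Matrix (Fin d) (Fin n) ℤ) (v : Fin n → ℂ)
    (u : Fin n → ℤ) : ℂ :=
  if A.mulVec u = 0 then hypCoeff v u else 0

/-- For `v ∈ (ℂ∖ℤ_{<0})ⁿ` with `A·v = β`, the coefficients of `φ_v` are well defined
(denominators are nonzero), and `φ_v` is annihilated by every toric operator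
`∂^{u₊} − ∂^{u₋}` (`u ∈ ker_ℤ A`, expressed by matching the coefficient of each
monomial `x^{v+w}`) and by every Euler operator `Σⱼ aᵢⱼ xⱼ∂ⱼ − βᵢ` (expressed
termwise). -/
theorem stmt13 (d n : ℕ) (A : Matrix (Fin d) (Fin n) ℤ)
    (hspan : ∀ z : Fin d → ℤ, ∃ c : Fin n → ℤ, A.mulVec c = z)
    (β : Fin d → ℂ) (v : Fin n → ℂ)
    (hv : ∀ j, ¬ ∃ k : ℤ, k < 0 ∧ v j = (k : ℂ))
    (hAv : ∀ i, ∑ j, (A i j : ℂ) * v j = β i) :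
    (∀ u : Fin n → ℤ,
      (∏ j, ∏ l ∈ Finset.range (uposN u j), (v j + (l + 1))) ≠ 0) ∧
    (∀ u : Fin n → ℤ, A.mulVec u = 0 → ∀ w : Fin n → ℤ,
      phiCoeff A v (w + uposZ u) *
          fallP (fun j => v j + ((w j + uposZ u j : ℤ) : ℂ)) (uposN u)
        = phiCoeff A v (w + unegZ u) *
          fallP (fun j => v j + ((w j + unegZ u j : ℤ) : ℂ)) (unegN u)) ∧
    (∀ i : Fin d, ∀ u : Fin n → ℤ, phiCoeff A v u ≠ 0 →
      ∑ j, (A i j : ℂ) * (v j + (u j : ℂ)) = β i) := by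
  have hprod : ∀ z : Fin n → ℤ, hypCoeff v z = ∏ j, F1 (v j) (z j) := by
    intro z
    unfold hypCoeff F1 uposN unegN
    rw [Finset.prod_div_distrib]
  refine ⟨?_, ?_, ?_⟩
  · intro u
    apply Finset.prod_ne_zero_iff.2
    intro j _
    apply Finset.prod_ne_zero_iff.2
    intro l _
    simpa using hne (v j) (hv j) l
  · intro u hu w
    have hside : ∀ (p : Fin n → ℤ) (a : Fin n → ℕ), (∀ j, p j = (a j : ℤ)) →
        hypCoeff v (w + p) * fallP (fun j => v j + ((w j + p j : ℤ) : ℂ)) a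
          = hypCoeff v w := by
      intro p a hpa
      rw [hprod, hprod]
      unfold fallP
      rw [← Finset.prod_mul_distrib]
      apply Finset.prod_congr rfl
      intro j _
      show F1 (v j) (w j + p j) *
        (∏ l ∈ Finset.range (a j), (v j + ((w j + p j : ℤ) : ℂ) - l)) = F1 (v j) (w j)
      rw [hpa j]
      exact F1_key (v j) (hv j) (w j) (a j)
    have hcond : A.mulVec (w + uposZ u) = A.mulVec (w + unegZ u) := by
      have heq : (w + uposZ u) = (w + unegZ u) + u := by
        funext j
        simp only [Pi.add_apply, uposZ, unegZ]
        omega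
      rw [heq, Matrix.mulVec_add, hu, add_zero]
    unfold phiCoeff
    rw [hcond]
    by_cases h : A.mulVec (w + unegZ u) = 0
    · rw [if_pos h, if_pos h]
      have hupos : ∀ j, uposZ u j = ((uposN u j : ℕ) : ℤ) := by
        intro j; simp only [uposZ, uposN]; omega
      have huneg : ∀ j, unegZ u j = ((unegN u j : ℕ) : ℤ) := by
        intro j; simp only [unegZ, unegN]; omega
      rw [hside (uposZ u) (uposN u) hupos, hside (unegZ u) (unegN u) huneg]
    · rw [if_neg h, if_neg h, zero_mul, zero_mul]
  · intro i u hphi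
    have hker : A.mulVec u = 0 := by
      by_contra h
      exact hphi (by simp [phiCoeff, h])
    have h0 : (∑ j, (A i j : ℂ) * (u j : ℂ)) = 0 := by
      have h1 : A.mulVec u i = 0 := by rw [hker]; rfl
      have h2 : (∑ j, A i j * u j) = 0 := by
        simpa [Matrix.mulVec, dotProduct] using h1
      have h3 := congrArg (fun z : ℤ => (z : ℂ)) h2
      push_cast at h3
      exact h3
    calc ∑ j, (A i j : ℂ) * (v j + (u j : ℂ))
        = (∑ j, (A i j : ℂ) * v j) + ∑ j, (A i j : ℂ) * (u j : ℂ) := by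
          rw [← Finset.sum_add_distrib]
          apply Finset.sum_congr rfl
          intros; ring
      _ = β i := by rw [hAv i, h0, add_zero]
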